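/- Let (V, ω) be a finite-dimensional symplectic vector space, C a coisotropic subspace, and π : C → C/C^⊥ the projection onto the symplectic reduction. If L is a lagrangian subspace of V, then L̄ = π(L ∩ C) is a lagrangian subspace of C/C^⊥ with its induced symplectic form. -/

import Mathlib

open Module

variable {K V : Type*} [Field K] [AddCommGroup V] [Module K V]

/-- The symplectic orthogonal `W^⊥ = {v ∈ V : ω(v,w) = 0 for all w ∈ W}` of a subspace `W`
with respect to a bilinear form `B`. -/
def sympOrtho (B : V →ₗ[K] V →ₗ[K] K) (W : Submodule K V) : Submodule K V where
  carrier := {v | ∀ w ∈ W, B v w = 0}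
  add_mem' := by
    intro a b ha hb w hw
    simp only [map_add, LinearMap.add_apply, ha w hw, hb w hw, add_zero]
  zero_mem' := by
    intro w hw
    simp
  smul_mem' := by
    intro c a ha w hw
    simp only [map_smul, LinearMap.smul_apply, ha w hw, smul_zero]

lemma mem_sympOrtho_iff {B : V →ₗ[K] V →ₗ[K] K} {W : Submodule K V} {v : V} :
    v ∈ sympOrtho B W ↔ ∀ w ∈ W, B v w = 0 := Iff.rfl

lemma sympOrtho_eq_orthogonal {B : V →ₗ[K] V →ₗ[K] K} (halt : ∀ v, B v v = 0)
    (W : Submodule K V) : sympOrtho B W = LinearMap.BilinForm.orthogonal B W := by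
  have hrefl : B.IsRefl := LinearMap.IsAlt.isRefl halt
  ext v
  constructor
  · intro h w hw
    exact hrefl _ _ (h w hw)
  · intro h w hw
    exact hrefl _ _ (h w hw)

lemma orthogonal_sup {B : V →ₗ[K] V →ₗ[K] K} (W₁ W₂ : Submodule K V) :
    LinearMap.BilinForm.orthogonal B (W₁ ⊔ W₂)
      = LinearMap.BilinForm.orthogonal B W₁ ⊓ LinearMap.BilinForm.orthogonal B W₂ := by
  ext v
  simp only [LinearMap.BilinForm.mem_orthogonal_iff, Submodule.mem_inf]
  constructor
  · intro h
    exact ⟨fun n hn => h n (Submodule.mem_sup_left hn),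
           fun n hn => h n (Submodule.mem_sup_right hn)⟩
  · rintro ⟨h₁, h₂⟩ n hn
    rcases Submodule.mem_sup.mp hn with ⟨a, ha, b, hb, rfl⟩
    have := h₁ a ha
    have := h₂ b hb
    rw [map_add, LinearMap.add_apply, h₁ a ha, h₂ b hb, add_zero]

lemma ortho_inf [FiniteDimensional K V] {B : V →ₗ[K] V →ₗ[K] K}
    (halt : ∀ v, B v v = 0) (hnd : ∀ v, (∀ w, B v w = 0) → v = 0)
    (W₁ W₂ : Submodule K V) :
    sympOrtho B (W₁ ⊓ W₂) = sympOrtho B W₁ ⊔ sympOrtho B W₂ := by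
  have hrefl : B.IsRefl := LinearMap.IsAlt.isRefl halt
  have hnd' : LinearMap.BilinForm.Nondegenerate B := hrefl.nondegenerate_iff_separatingLeft.mpr hnd
  have dbl := fun W => LinearMap.BilinForm.orthogonal_orthogonal hnd' hrefl W
  simp only [sympOrtho_eq_orthogonal halt]
  conv_lhs => rw [← dbl W₁, ← dbl W₂]
  rw [← orthogonal_sup, dbl]

theorem stmt10 [FiniteDimensional K V] (B : V →ₗ[K] V →ₗ[K] K)
    (halt : ∀ v, B v v = 0) (hnd : ∀ v, (∀ w, B v w = 0) → v = 0)
    (C : Submodule K V) (hC : sympOrtho B C ≤ C)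
    (Bbar : (C ⧸ (sympOrtho B C).comap C.subtype) →ₗ[K]
        (C ⧸ (sympOrtho B C).comap C.subtype) →ₗ[K] K)
    (hBbar : ∀ v w : C, Bbar (Submodule.Quotient.mk v) (Submodule.Quotient.mk w)
      = B (v : V) (w : V))
    (L : Submodule K V) (hL : L = sympOrtho B L) :
    (L.comap C.subtype).map ((sympOrtho B C).comap C.subtype).mkQ
      = sympOrtho Bbar ((L.comap C.subtype).map ((sympOrtho B C).comap C.subtype).mkQ) := by
  ext x
  constructor
  · -- easy direction: L̄ ⊆ L̄^⊥
    rintro hx y hy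
    rcases Submodule.mem_map.mp hx with ⟨a, ha, rfl⟩
    rcases Submodule.mem_map.mp hy with ⟨b, hb, rfl⟩
    rw [Submodule.mkQ_apply, Submodule.mkQ_apply, hBbar]
    have haL : (a : V) ∈ L := ha
    have hbL : (b : V) ∈ L := hb
    rw [hL] at haL
    exact haL _ hbL
  · -- hard direction
    intro hx
    obtain ⟨c, rfl⟩ := Submodule.mkQ_surjective _ x
    have hcv : (c : V) ∈ sympOrtho B (L ⊓ C) := by
      intro w hw
      rcases hw with ⟨hwL, hwC⟩
      have : Bbar (Submodule.Quotient.mk c) (Submodule.Quotient.mk ⟨w, hwC⟩) = 0 := by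
        apply hx
        exact Submodule.mem_map_of_mem (by exact hwL)
      rwa [hBbar] at this
    rw [ortho_inf halt hnd, ← hL] at hcv
    rcases Submodule.mem_sup.mp hcv with ⟨l, hl, z, hz, hczl⟩
    have hzC : z ∈ C := hC hz
    have hlC : l ∈ C := by
      have : l = (c : V) - z := by rw [← hczl]; abel
      rw [this]; exact Submodule.sub_mem _ c.2 hzC
    refine Submodule.mem_map.mpr ⟨⟨l, hlC⟩, hl, ?_⟩
    rw [Submodule.mkQ_apply, Submodule.mkQ_apply, Submodule.Quotient.eq]
    show (((⟨l, hlC⟩ : C) - c : C) : V) ∈ sympOrtho B C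
    have : (((⟨l, hlC⟩ : C) - c : C) : V) = -z := by
      push_cast
      rw [← hczl]; abel
    rw [this]
    exact Submodule.neg_mem _ hz
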